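/- With area a(p) = Σ_{i<j : μ(x_i) > μ(x_j)} det(x_i, x_j) as above, let p have a nonconvex adjacent pair (x_i, x_{i+1}) with μ(x_i) > μ(x_{i+1}), and let p' be obtained from p by replacing (x_i, x_{i+1}) with any convex path (y_1,...,y_k) of total weight x_i + x_{i+1} all of whose segments y_t lie in the closed triangle spanned by x_{i+1} and x_i (i.e., each y_t = α x_i + β x_{i+1} with the slopes satisfying μ(x_{i+1}) ≤ μ(y_t) ≤ μ(x_i)). Then a(p') < a(p). -/

import Mathlib

/-- `det(a,b) = a₁b₂ - a₂b₁`. -/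
def detZ (a b : ℤ × ℤ) : ℤ := a.1 * b.2 - a.2 * b.1

/-- Membership in the half-plane `{(a,b) : a > 0, or a = 0 and b > 0}`. -/
def inH (x : ℤ × ℤ) : Prop := 0 < x.1 ∨ (x.1 = 0 ∧ 0 < x.2)

/-- The area `a(p) = Σ_{i<j : μ(xᵢ) > μ(xⱼ)} det(xⱼ,xᵢ)` of the path
`(p s, …, p (t-1))`. -/
def areaSum (p : ℕ → ℤ × ℤ) (s t : ℕ) : ℤ :=
  ∑ i ∈ Finset.Ico s t, ∑ j ∈ Finset.Ico s t,
    if i < j ∧ detZ (p i) (p j) < 0 then detZ (p j) (p i) else 0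

/-- A local convexification strictly decreases the area: if `(p i, p (i+1))` is a
nonconvex adjacent pair (`μ(p i) > μ(p (i+1))`, i.e. `detZ (p i) (p (i+1)) < 0`) and it
is replaced by a convex path `(y₀,…,y_{k-1})` of the same total weight whose segments
all lie (in slope) in the closed triangle spanned by `p (i+1)` and `p i`, then the
resulting path `q` of length `n + k - 2` has `a(q) < a(p)`. -/
lemma detZ_swap (a b : ℤ × ℤ) : detZ b a = -detZ a b := by simp [detZ]; ring

def phiP (a b : ℤ × ℤ) : ℤ := max (detZ b a) 0

lemma phiP_nonneg (a b : ℤ × ℤ) : 0 ≤ phiP a b := le_max_right _ _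

lemma ite_eq_phiP (a b : ℤ × ℤ) :
    (if detZ a b < 0 then detZ b a else 0) = phiP a b := by
  have h := detZ_swap a b
  unfold phiP
  rcases lt_or_ge (detZ a b) 0 with hlt | hge
  · rw [if_pos hlt, max_eq_left (by omega)]
  · rw [if_neg (not_lt.2 hge), max_eq_right (by omega)]

lemma cramer (a b u z : ℤ × ℤ) :
    detZ b a * detZ u z = detZ b u * detZ a z + detZ u a * detZ b z := by
  simp [detZ]; ring

lemma cramer' (a b u z : ℤ × ℤ) :
    detZ b a * detZ z u = detZ b u * detZ z a + detZ u a * detZ z b := by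
  simp [detZ]; ring

lemma detZ_sum_left (c : ℤ × ℤ) (s : Finset ℕ) (f : ℕ → ℤ × ℤ) :
    detZ (∑ t ∈ s, f t) c = ∑ t ∈ s, detZ (f t) c := by
  induction s using Finset.cons_induction with
  | empty => simp [detZ]
  | cons a s ha ih =>
    rw [Finset.sum_cons, Finset.sum_cons, ← ih]
    simp [detZ]; ring

lemma detZ_sum_right (c : ℤ × ℤ) (s : Finset ℕ) (f : ℕ → ℤ × ℤ) :
    detZ c (∑ t ∈ s, f t) = ∑ t ∈ s, detZ c (f t) := by
  induction s using Finset.cons_induction with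
  | empty => simp [detZ]
  | cons a s ha ih =>
    rw [Finset.sum_cons, Finset.sum_cons, ← ih]
    simp [detZ]; ring

lemma max_comb {α β u v : ℤ} (hα : 0 ≤ α) (hβ : 0 ≤ β) :
    max (α * u + β * v) 0 ≤ α * max u 0 + β * max v 0 := by
  have h1 : α * u ≤ α * max u 0 := mul_le_mul_of_nonneg_left (le_max_left _ _) hα
  have h2 : β * v ≤ β * max v 0 := mul_le_mul_of_nonneg_left (le_max_left _ _) hβ
  have h3 : 0 ≤ α * max u 0 := mul_nonneg hα (le_max_right _ _)
  have h4 : 0 ≤ β * max v 0 := mul_nonneg hβ (le_max_right _ _)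
  exact max_le (by linarith) (by linarith)

lemma transH {a b c : ℤ × ℤ} (ha : inH a) (hb : inH b) (hc : inH c)
    (h1 : 0 ≤ detZ a b) (h2 : 0 ≤ detZ b c) : 0 ≤ detZ a c := by
  have ha1 : 0 ≤ a.1 := by rcases ha with h | ⟨h, _⟩ <;> omega
  have hc1 : 0 ≤ c.1 := by rcases hc with h | ⟨h, _⟩ <;> omega
  have key : b.1 * detZ a c = a.1 * detZ b c + c.1 * detZ a b := by simp [detZ]; ring
  rcases hb with hb1 | ⟨hb1, hb2⟩
  · nlinarith [mul_nonneg ha1 h2, mul_nonneg hc1 h1]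
  · have hc1' : c.1 = 0 := by
      simp [detZ, hb1] at h2
      rcases hc with h | ⟨h, _⟩
      · nlinarith
      · exact h
    rcases hc with h | ⟨_, hc2⟩
    · omega
    · simp [detZ, hc1']
      positivity

def pairSum (x : ℕ → ℤ × ℤ) (N : ℕ) : ℤ :=
  ∑ j ∈ Finset.range N, ∑ i ∈ Finset.range j, phiP (x i) (x j)

lemma areaSum_eq (p : ℕ → ℤ × ℤ) (t : ℕ) : areaSum p 0 t = pairSum p t := by
  unfold areaSum pairSum
  rw [Finset.sum_comm]
  simp only [← Finset.range_eq_Ico]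
  refine Finset.sum_congr rfl fun j hj => ?_
  rw [Finset.mem_range] at hj
  rw [← Finset.sum_subset (Finset.range_subset_range.2 hj.le)
      (fun x _ hx => by rw [Finset.mem_range, not_lt] at hx; rw [if_neg]; omega)]
  refine Finset.sum_congr rfl fun m hm => ?_
  rw [Finset.mem_range] at hm
  rw [← ite_eq_phiP]
  simp [hm]

lemma pairSum_split (x : ℕ → ℤ × ℤ) (m N : ℕ) (h : m ≤ N) :
    pairSum x N = pairSum x m
      + ∑ j ∈ Finset.Ico m N, ((∑ i ∈ Finset.range m, phiP (x i) (x j))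
          + ∑ i ∈ Finset.Ico m j, phiP (x i) (x j)) := by
  unfold pairSum
  simp only [Finset.range_eq_Ico]
  rw [← Finset.sum_Ico_consecutive _ (Nat.zero_le m) h]
  congr 1
  refine Finset.sum_congr rfl fun j hj => ?_
  rw [Finset.mem_Ico] at hj
  rw [← Finset.sum_Ico_consecutive _ (Nat.zero_le m) hj.1]

set_option linter.unusedSectionVars false

section Block
variable {a b : ℤ × ℤ} {k : ℕ} {y : ℕ → ℤ × ℤ}
  (hD : 0 < detZ b a)
  (hcoef : ∀ t < k, 0 ≤ detZ b (y t) ∧ 0 ≤ detZ (y t) a)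
  (hsum : ∑ t ∈ Finset.range k, y t = a + b)

include hD hcoef hsum

lemma sum_coef_left : ∑ t ∈ Finset.range k, detZ b (y t) = detZ b a := by
  rw [← detZ_sum_right, hsum]
  simp [detZ]; ring

lemma sum_coef_right : ∑ t ∈ Finset.range k, detZ (y t) a = detZ b a := by
  rw [← detZ_sum_left, hsum]
  simp [detZ]; ring

lemma blockLeft (z : ℤ × ℤ) :
    ∑ t ∈ Finset.range k, max (detZ (y t) z) 0 ≤ max (detZ a z) 0 + max (detZ b z) 0 := by
  set D := detZ b a with hDdef
  have key : ∀ t ∈ Finset.range k,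
      D * max (detZ (y t) z) 0 ≤ detZ b (y t) * max (detZ a z) 0
        + detZ (y t) a * max (detZ b z) 0 := by
    intro t ht
    rw [Finset.mem_range] at ht
    obtain ⟨h1, h2⟩ := hcoef t ht
    calc D * max (detZ (y t) z) 0 = max (D * detZ (y t) z) 0 := by
          rw [mul_max_of_nonneg _ _ hD.le, mul_zero]
      _ = max (detZ b (y t) * detZ a z + detZ (y t) a * detZ b z) 0 := by
          rw [hDdef, cramer]
      _ ≤ _ := max_comb h1 h2
  have := Finset.sum_le_sum key
  rw [← Finset.mul_sum, Finset.sum_add_distrib, ← Finset.sum_mul, ← Finset.sum_mul,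
    sum_coef_left hD hcoef hsum, sum_coef_right hD hcoef hsum, ← hDdef, ← mul_add] at this
  exact le_of_mul_le_mul_left this hD

lemma blockRight (z : ℤ × ℤ) :
    ∑ t ∈ Finset.range k, max (detZ z (y t)) 0 ≤ max (detZ z a) 0 + max (detZ z b) 0 := by
  set D := detZ b a with hDdef
  have key : ∀ t ∈ Finset.range k,
      D * max (detZ z (y t)) 0 ≤ detZ b (y t) * max (detZ z a) 0
        + detZ (y t) a * max (detZ z b) 0 := by
    intro t ht
    rw [Finset.mem_range] at ht
    obtain ⟨h1, h2⟩ := hcoef t ht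
    calc D * max (detZ z (y t)) 0 = max (D * detZ z (y t)) 0 := by
          rw [mul_max_of_nonneg _ _ hD.le, mul_zero]
      _ = max (detZ b (y t) * detZ z a + detZ (y t) a * detZ z b) 0 := by
          rw [hDdef, cramer']
      _ ≤ _ := max_comb h1 h2
  have := Finset.sum_le_sum key
  rw [← Finset.mul_sum, Finset.sum_add_distrib, ← Finset.sum_mul, ← Finset.sum_mul,
    sum_coef_left hD hcoef hsum, sum_coef_right hD hcoef hsum, ← hDdef, ← mul_add] at this
  exact le_of_mul_le_mul_left this hD

end Block

set_option linter.unusedSectionVars true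

lemma chainH {k : ℕ} {y : ℕ → ℤ × ℤ} (hHy : ∀ t < k, inH (y t))
    (hconv : ∀ t, t + 1 < k → 0 ≤ detZ (y t) (y (t + 1))) :
    ∀ t t', t ≤ t' → t' < k → 0 ≤ detZ (y t) (y t') := by
  intro t t' htt' ht'
  induction t' with
  | zero =>
    have : t = 0 := Nat.le_zero.mp htt'
    simp [this, detZ, mul_comm]
  | succ m ih =>
    rcases Nat.eq_or_lt_of_le htt' with h | h
    · simp [h, detZ, mul_comm]
    · have hm : t ≤ m := Nat.lt_succ_iff.mp h
      have h1 : 0 ≤ detZ (y t) (y m) := ih hm (by omega)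
      exact transH (hHy t (by omega)) (hHy m (by omega)) (hHy (m+1) ht')
        h1 (hconv m ht')

lemma sum_split_head (f : ℕ → ℤ) (a b : ℕ) (h : a ≤ b) :
    ∑ m ∈ Finset.range b, f m
      = ∑ m ∈ Finset.range a, f m + ∑ m ∈ Finset.Ico a b, f m := by
  rw [Finset.range_eq_Ico, ← Finset.sum_Ico_consecutive f (Nat.zero_le a) h]
  rw [Finset.range_eq_Ico]

lemma sum_Ico_shift (f : ℕ → ℤ) (a c : ℕ) :
    ∑ m ∈ Finset.Ico a (a + c), f m = ∑ t ∈ Finset.range c, f (a + t) := by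
  rw [Finset.sum_Ico_eq_sum_range, Nat.add_sub_cancel_left]

lemma sum_pair (f : ℕ → ℤ) (a : ℕ) :
    ∑ m ∈ Finset.Ico a (a + 2), f m = f a + f (a + 1) := by
  rw [sum_Ico_shift]
  simp [Finset.sum_range_succ]

theorem area_local_convexification_lt (n i k : ℕ) (p y : ℕ → ℤ × ℤ)
    (hH : ∀ m < n, inH (p m)) (hi : i + 1 < n)
    (hnonconv : detZ (p i) (p (i + 1)) < 0)
    (hk : 1 ≤ k) (hHy : ∀ t < k, inH (y t))
    (hconv : ∀ t, t + 1 < k → 0 ≤ detZ (y t) (y (t + 1)))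
    (hsum : ∑ t ∈ Finset.range k, y t = p i + p (i + 1))
    (htri : ∀ t < k, 0 ≤ detZ (p (i + 1)) (y t) ∧ 0 ≤ detZ (y t) (p i)) :
    areaSum (fun j => if j < i then p j else if j < i + k then y (j - i)
      else p (j - k + 2)) 0 (n + k - 2) < areaSum p 0 n := by
  set q : ℕ → ℤ × ℤ := fun j => if j < i then p j else if j < i + k then y (j - i)
      else p (j - k + 2) with hqdef
  rw [areaSum_eq, areaSum_eq]
  have hi2 : i + 2 ≤ n := by omega
  have hD : 0 < detZ (p (i + 1)) (p i) := by
    have := detZ_swap (p i) (p (i + 1)); omega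
  set D := detZ (p (i + 1)) (p i) with hDdef
  have hq1 : ∀ j, j < i → q j = p j := fun j hj => by simp [hqdef, hj]
  have hq2 : ∀ j, i ≤ j → j < i + k → q j = y (j - i) := fun j h1 h2 => by
    simp only [hqdef]
    rw [if_neg (by omega), if_pos h2]
  have hq3 : ∀ j, i + k ≤ j → q j = p (j - k + 2) := fun j h1 => by
    simp only [hqdef]
    rw [if_neg (by omega), if_neg (by omega)]
  -- the two split decompositions
  rw [pairSum_split q (i + k) (n + k - 2) (by omega),
      pairSum_split q i (i + k) (by omega),
      pairSum_split p (i + 2) n hi2,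
      pairSum_split p i (i + 2) (by omega)]
  -- head parts agree
  have e0 : pairSum q i = pairSum p i := by
    unfold pairSum
    refine Finset.sum_congr rfl fun j hj => Finset.sum_congr rfl fun m hm => ?_
    rw [Finset.mem_range] at hj hm
    rw [hq1 j hj, hq1 m (by omega)]
  -- internal block contributions vanish
  have hT2b : ∑ j ∈ Finset.Ico i (i + k), ∑ m ∈ Finset.Ico i j, phiP (q m) (q j) = 0 := by
    refine Finset.sum_eq_zero fun j hj => Finset.sum_eq_zero fun m hm => ?_
    rw [Finset.mem_Ico] at hj hm
    rw [hq2 j hj.1 hj.2, hq2 m hm.1 (by omega)]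
    have h0 : 0 ≤ detZ (y (m - i)) (y (j - i)) :=
      chainH hHy hconv _ _ (by omega) (by omega)
    have := detZ_swap (y (m - i)) (y (j - i))
    unfold phiP
    rw [max_eq_right (by omega)]
  -- bound for pairs (before, block)
  have hT2a : ∑ j ∈ Finset.Ico i (i + k), ∑ m ∈ Finset.range i, phiP (q m) (q j)
      ≤ ∑ m ∈ Finset.range i, (phiP (p m) (p i) + phiP (p m) (p (i + 1))) := by
    rw [Finset.sum_Ico_eq_sum_range]
    have hkk : i + k - i = k := by omega
    rw [hkk, Finset.sum_comm]
    refine Finset.sum_le_sum fun m hm => ?_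
    rw [Finset.mem_range] at hm
    have e1 : ∀ t ∈ Finset.range k, phiP (q m) (q (i + t)) = max (detZ (y t) (p m)) 0 := by
      intro t ht
      rw [Finset.mem_range] at ht
      rw [hq1 m hm, hq2 (i + t) (by omega) (by omega)]
      simp [phiP]
    rw [Finset.sum_congr rfl e1]
    exact blockLeft hD htri hsum (p m)
  -- the middle part of p's decomposition, made explicit
  have hU2 : ∑ j ∈ Finset.Ico i (i + 2), ((∑ m ∈ Finset.range i, phiP (p m) (p j))
        + ∑ m ∈ Finset.Ico i j, phiP (p m) (p j))
      = ∑ m ∈ Finset.range i, (phiP (p m) (p i) + phiP (p m) (p (i + 1))) + D := by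
    rw [sum_pair, Finset.Ico_self, Finset.sum_empty,
      sum_Ico_shift _ i 1, Finset.sum_range_one, Nat.add_zero, Finset.sum_add_distrib]
    have hpe : phiP (p i) (p (i + 1)) = D := by
      unfold phiP; rw [max_eq_left hD.le]
    simp only [Nat.add_zero]
    rw [hpe]; ring
  -- tail comparison
  have hT3 : ∑ j ∈ Finset.Ico (i + k) (n + k - 2), ((∑ m ∈ Finset.range (i + k), phiP (q m) (q j))
        + ∑ m ∈ Finset.Ico (i + k) j, phiP (q m) (q j))
      ≤ ∑ j ∈ Finset.Ico (i + 2) n, ((∑ m ∈ Finset.range (i + 2), phiP (p m) (p j))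
        + ∑ m ∈ Finset.Ico (i + 2) j, phiP (p m) (p j)) := by
    rw [Finset.sum_Ico_eq_sum_range, Finset.sum_Ico_eq_sum_range]
    have l1 : n + k - 2 - (i + k) = n - i - 2 := by omega
    have l2 : n - (i + 2) = n - i - 2 := by omega
    rw [l1, l2]
    refine Finset.sum_le_sum fun r hr => ?_
    rw [Finset.mem_range] at hr
    have hqj : q (i + k + r) = p (i + 2 + r) := by
      rw [hq3 _ (by omega)]; congr 1; omega
    have tail_eq : ∑ m ∈ Finset.Ico (i + k) (i + k + r), phiP (q m) (q (i + k + r))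
        = ∑ m ∈ Finset.Ico (i + 2) (i + 2 + r), phiP (p m) (p (i + 2 + r)) := by
      rw [Finset.sum_Ico_eq_sum_range, Finset.sum_Ico_eq_sum_range]
      simp only [Nat.add_sub_cancel_left]
      refine Finset.sum_congr rfl fun s hs => ?_
      rw [Finset.mem_range] at hs
      rw [hqj, hq3 _ (by omega)]
      congr 2; omega
    have head_split_q : ∑ m ∈ Finset.range (i + k), phiP (q m) (q (i + k + r))
        = ∑ m ∈ Finset.range i, phiP (p m) (p (i + 2 + r))
          + ∑ t ∈ Finset.range k, max (detZ (p (i + 2 + r)) (y t)) 0 := by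
      rw [sum_split_head _ i (i + k) (by omega), sum_Ico_shift]
      congr 1
      · refine Finset.sum_congr rfl fun m hm => ?_
        rw [Finset.mem_range] at hm
        rw [hq1 m hm, hqj]
      · refine Finset.sum_congr rfl fun t ht => ?_
        rw [Finset.mem_range] at ht
        rw [hqj, hq2 (i + t) (by omega) (by omega)]
        simp [phiP]
    have head_split_p : ∑ m ∈ Finset.range (i + 2), phiP (p m) (p (i + 2 + r))
        = ∑ m ∈ Finset.range i, phiP (p m) (p (i + 2 + r))
          + (max (detZ (p (i + 2 + r)) (p i)) 0 + max (detZ (p (i + 2 + r)) (p (i + 1))) 0) := by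
      rw [sum_split_head _ i (i + 2) (by omega), sum_pair]
      simp [phiP]
    rw [head_split_q, head_split_p, tail_eq]
    have := blockRight hD htri hsum (p (i + 2 + r))
    linarith
  have hsplit2 : ∑ j ∈ Finset.Ico i (i + k), ((∑ m ∈ Finset.range i, phiP (q m) (q j))
        + ∑ m ∈ Finset.Ico i j, phiP (q m) (q j))
      = ∑ j ∈ Finset.Ico i (i + k), ∑ m ∈ Finset.range i, phiP (q m) (q j)
        + ∑ j ∈ Finset.Ico i (i + k), ∑ m ∈ Finset.Ico i j, phiP (q m) (q j) :=
    Finset.sum_add_distrib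
  rw [e0, hsplit2, hT2b, add_zero, hU2]
  linarith [hT2a, hT3]
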